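/- Let φ : G → H be a group homomorphism whose kernel equals the center of G, let t ≥ 2, and let g₁, …, g_t ∈ G. Then the homomorphism from the free group F_t on t generators to H sending the i-th generator to φ(g_i) is injective if and only if the homomorphism from F_t to G sending the i-th generator to g_i is injective. In other words, φ(g₁), …, φ(g_t) freely generate a free subgroup of H of rank t if and only if g₁, …, g_t freely generate a free subgroup of G of rank t. -/

import Mathlib

open FreeGroup in
private lemma aux_cons_toWord {α : Type*} [DecidableEq α] (w : FreeGroup α)
    (x : α × Bool) (h : w.toWord.head? ≠ some (x.1, !x.2)) :
    (FreeGroup.mk [x] * w).toWord = x :: w.toWord := by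
  conv_lhs => rw [← FreeGroup.mk_toWord (x := w)]
  rw [FreeGroup.mul_mk, FreeGroup.toWord_mk, List.singleton_append, FreeGroup.reduce.cons]
  rw [show reduce w.toWord = w.toWord from FreeGroup.reduce_toWord w]
  cases hL : w.toWord with
  | nil => rfl
  | cons hd tl =>
    simp only [hL, List.head?] at h
    have : ¬ (x.1 = hd.1 ∧ x.2 = !hd.2) := by
      rintro ⟨h1, h2⟩
      apply h
      rw [h1, h2]
      simp
    simp [this]

private lemma aux_invRev_cons {α : Type*} (L : List (α × Bool)) (c : α) (s : Bool) :
    FreeGroup.invRev ((c, !s) :: FreeGroup.invRev L) = L ++ [(c, s)] := by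
  simp [FreeGroup.invRev, Function.comp_def]

private lemma aux_center {α : Type*} [DecidableEq α] {a b : α} (hab : a ≠ b)
    {w : FreeGroup α} (ha : FreeGroup.of a * w = w * FreeGroup.of a)
    (hb : FreeGroup.of b * w = w * FreeGroup.of b) : w = 1 := by
  by_contra hw
  have hL : w.toWord ≠ [] := fun h => hw (FreeGroup.toWord_eq_nil_iff.mp h)
  obtain ⟨⟨p, u⟩, L', hL'⟩ := List.exists_cons_of_ne_nil hL
  obtain ⟨c, hcp, hc⟩ : ∃ c, c ≠ p ∧ FreeGroup.of c * w = w * FreeGroup.of c := by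
    rcases eq_or_ne a p with rfl | h
    · exact ⟨b, fun hbp => hab hbp.symm, hb⟩
    · exact ⟨a, h, ha⟩
  have hcomm : Commute (FreeGroup.of c) w := hc
  set q : α := (w.toWord.getLast hL).1 with hq
  set tt : Bool := (w.toWord.getLast hL).2 with htt
  set s : Bool := if q = c then tt else true with hs
  have hofc : FreeGroup.of c = FreeGroup.mk [(c, true)] := rfl
  have hinvc : (FreeGroup.of c)⁻¹ = FreeGroup.mk [(c, false)] := by
    rw [hofc, FreeGroup.inv_mk]; rfl
  have hcs : FreeGroup.mk [(c, s)] * w = w * FreeGroup.mk [(c, s)] := by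
    cases s
    · rw [← hinvc]; exact hcomm.inv_left.eq
    · rw [← hofc]; exact hc
  have hfront : (FreeGroup.mk [(c, s)] * w).toWord = (c, s) :: w.toWord := by
    apply aux_cons_toWord
    rw [hL']
    intro h
    injection h with h'
    exact hcp (congrArg Prod.fst h').symm
  have hback : (w * FreeGroup.mk [(c, s)]).toWord = w.toWord ++ [(c, s)] := by
    have h1 : (w * FreeGroup.mk [(c, s)])⁻¹ = FreeGroup.mk [(c, !s)] * w⁻¹ := by
      rw [mul_inv_rev, FreeGroup.inv_mk]; rfl
    have h2 : (FreeGroup.mk [(c, !s)] * w⁻¹).toWord = (c, !s) :: w⁻¹.toWord := by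
      apply aux_cons_toWord
      rw [FreeGroup.toWord_inv, FreeGroup.invRev]
      intro h
      have hLrev : (List.reverse (List.map (fun x : α × Bool => (x.1, !x.2)) w.toWord)).head? =
          some (q, !tt) := by
        rw [List.head?_reverse, List.getLast?_map, List.getLast?_eq_getLast hL]
        rfl
      rw [hLrev] at h
      injection h with h'
      have hqc : q = c := congrArg Prod.fst h'
      have hsnd : (!tt) = (!(!s)) := congrArg Prod.snd h'
      have hstt : s = tt := by rw [hs, if_pos hqc]
      rw [hstt] at hsnd
      simp at hsnd
    have h3 : FreeGroup.invRev (w * FreeGroup.mk [(c, s)]).toWord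
        = (c, !s) :: FreeGroup.invRev w.toWord := by
      rw [← FreeGroup.toWord_inv, h1, h2, FreeGroup.toWord_inv]
    have h4 := congrArg FreeGroup.invRev h3
    rw [FreeGroup.invRev_invRev, aux_invRev_cons] at h4
    exact h4
  have heq := hfront.symm.trans ((congrArg FreeGroup.toWord hcs).trans hback)
  rw [hL'] at heq
  have hh := congrArg List.head? heq
  simp at hh
  exact hcp hh.1

/-- If `φ : G → H` is a group homomorphism with kernel the center
of `G`, `t ≥ 2`, and `g₁, …, g_t ∈ G`, then `φ(g₁), …, φ(g_t)` freely generate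
a free subgroup of `H` of rank `t` iff `g₁, …, g_t` freely generate a free
subgroup of `G` of rank `t`. -/
theorem free_of_image_iff_free_of_ker_eq_center
    {G H : Type*} [Group G] [Group H] (φ : G →* H)
    (hker : φ.ker = Subgroup.center G)
    (t : ℕ) (ht : 2 ≤ t) (g : Fin t → G) :
    Function.Injective (FreeGroup.lift (fun i => φ (g i))) ↔
      Function.Injective (FreeGroup.lift g) := by
  have hcomp : FreeGroup.lift (fun i => φ (g i)) = φ.comp (FreeGroup.lift g) := by
    apply FreeGroup.ext_hom
    intro i
    simp
  constructor
  · intro h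
    rw [hcomp] at h
    exact Function.Injective.of_comp h
  · intro hinj
    rw [hcomp]
    rw [injective_iff_map_eq_one]
    intro w hw
    have hcen : FreeGroup.lift g w ∈ Subgroup.center G := by
      rw [← hker]; exact hw
    rw [Subgroup.mem_center_iff] at hcen
    have key : ∀ c : Fin t, FreeGroup.of c * w = w * FreeGroup.of c := by
      intro c
      apply hinj
      simp only [map_mul, FreeGroup.lift_apply_of]
      exact hcen (g c)
    have h01 : (⟨0, by omega⟩ : Fin t) ≠ ⟨1, by omega⟩ := by
      simp [Fin.ext_iff]
    exact aux_center h01 (key _) (key _)
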